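/- Let D, E be n × n real matrices with D symmetric positive definite, and let T = D − E − Eᵀ and 𝕄 = (D − E)D⁻¹(D − Eᵀ) be the symmetric Gauss–Seidel preconditioner. Then M := 𝕄 − T = E D⁻¹ Eᵀ, which is symmetric positive semidefinite; moreover, if ‖D⁻¹‖ ≤ c₁ δt, ‖E‖ ≤ c₂, and ‖u^{n+1} − û^n‖ ≤ c₃ δt for positive constants c₁, c₂, c₃ and δt > 0, then ‖M(u^{n+1} − û^n)‖ ≤ c₁ c₂² c₃ δt², i.e., the SGS preconditioning term is of order O(δt²). -/

import Mathlib

open Matrix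

lemma sgs_mul_apply (k : ℕ) (A B : Matrix (Fin k) (Fin k) ℝ) (v : EuclideanSpace ℝ (Fin k)) :
    Matrix.toEuclideanLin (A * B) v = Matrix.toEuclideanLin A (Matrix.toEuclideanLin B v) := by
  simp [Matrix.toEuclideanLin_apply, Matrix.mulVec_mulVec]

lemma sgs_transpose_bound (k : ℕ) (E : Matrix (Fin k) (Fin k) ℝ) (c : ℝ) (hc : 0 ≤ c)
    (h : ∀ v : EuclideanSpace ℝ (Fin k), ‖Matrix.toEuclideanLin E v‖ ≤ c * ‖v‖)
    (v : EuclideanSpace ℝ (Fin k)) : ‖Matrix.toEuclideanLin Eᵀ v‖ ≤ c * ‖v‖ := by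
  set w : EuclideanSpace ℝ (Fin k) := Matrix.toEuclideanLin Eᵀ v with hw
  have hdd : ∀ x y : Fin k → ℝ, ∑ i, x i * y i = x ⬝ᵥ y := fun _ _ => rfl
  have h2 : (inner ℝ w w : ℝ) = inner ℝ v (Matrix.toEuclideanLin E w) := by
    simp only [hw, Matrix.toEuclideanLin_apply, PiLp.inner_apply, RCLike.inner_apply,
      conj_trivial]
    simp only [Matrix.mulVec_transpose]
    rw [hdd, hdd, dotProduct_comm (E *ᵥ _), Matrix.dotProduct_mulVec]
  have key : ‖w‖ ^ 2 ≤ ‖v‖ * (c * ‖w‖) := by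
    calc ‖w‖ ^ 2 = inner ℝ v (Matrix.toEuclideanLin E w) := by
          rw [← h2, real_inner_self_eq_norm_sq]
      _ ≤ ‖v‖ * ‖Matrix.toEuclideanLin E w‖ := real_inner_le_norm _ _
      _ ≤ ‖v‖ * (c * ‖w‖) := mul_le_mul_of_nonneg_left (h w) (norm_nonneg v)
  rcases eq_or_lt_of_le (norm_nonneg w) with h0 | h0
  · rw [← h0]; positivity
  · nlinarith [key]

/-- For the symmetric Gauss–Seidel preconditioner
`𝕄 = (D - E)D⁻¹(D - Eᵀ)` of `T = D - E - Eᵀ` with `D` symmetric positive definite, the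
induced proximal weight is `M = 𝕄 - T = E D⁻¹ Eᵀ`, which is symmetric positive
semidefinite; moreover, under the operator bounds `‖D⁻¹‖ ≤ c₁ δt`, `‖E‖ ≤ c₂` and the step
bound `‖uⁿ⁺¹ - ûⁿ‖ ≤ c₃ δt`, the SGS preconditioning term satisfies
`‖M(uⁿ⁺¹ - ûⁿ)‖ ≤ c₁ c₂² c₃ δt²`, i.e. it is of order `O(δt²)`. -/
theorem sgs_preconditioner_order
    (k : ℕ) (D E : Matrix (Fin k) (Fin k) ℝ) (hD : D.PosDef)
    (T 𝕄 M : Matrix (Fin k) (Fin k) ℝ)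
    (hT : T = D - E - Eᵀ)
    (h𝕄 : 𝕄 = (D - E) * D⁻¹ * (D - Eᵀ))
    (hM : M = 𝕄 - T)
    (c₁ c₂ c₃ δt : ℝ) (hc₁ : 0 < c₁) (hc₂ : 0 < c₂) (hc₃ : 0 < c₃) (hδt : 0 < δt)
    (hDinv : ∀ v : EuclideanSpace ℝ (Fin k),
      ‖Matrix.toEuclideanLin D⁻¹ v‖ ≤ c₁ * δt * ‖v‖)
    (hEbd : ∀ v : EuclideanSpace ℝ (Fin k),
      ‖Matrix.toEuclideanLin E v‖ ≤ c₂ * ‖v‖)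
    (unp1 uhat : EuclideanSpace ℝ (Fin k)) (hstep : ‖unp1 - uhat‖ ≤ c₃ * δt) :
    M = E * D⁻¹ * Eᵀ ∧ M.PosSemidef ∧
      ‖Matrix.toEuclideanLin M (unp1 - uhat)‖ ≤ c₁ * c₂ ^ 2 * c₃ * δt ^ 2 := by
  have hdet : IsUnit D.det := isUnit_iff_ne_zero.mpr (ne_of_gt hD.det_pos)
  have h1 : D * D⁻¹ = 1 := Matrix.mul_nonsing_inv D hdet
  have h2 : D⁻¹ * D = 1 := Matrix.nonsing_inv_mul D hdet
  have hMeq : M = E * D⁻¹ * Eᵀ := by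
    rw [hM, h𝕄, hT]
    have e1 : (D - E) * D⁻¹ = 1 - E * D⁻¹ := by rw [Matrix.sub_mul, h1]
    rw [e1, Matrix.sub_mul, Matrix.mul_sub, one_mul, Matrix.mul_sub,
      mul_assoc E D⁻¹ D, h2, mul_one]
    noncomm_ring
  have hTransE : (Eᵀ : Matrix (Fin k) (Fin k) ℝ) = Eᴴ := by
    simp [Matrix.conjTranspose, Matrix.map, starRingEnd_apply]
    rfl
  refine ⟨hMeq, ?_, ?_⟩
  · rw [hMeq, hTransE]
    exact hD.inv.posSemidef.mul_mul_conjTranspose_same E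
  · set v := unp1 - uhat with hv
    have happ : Matrix.toEuclideanLin M v
        = Matrix.toEuclideanLin E (Matrix.toEuclideanLin D⁻¹ (Matrix.toEuclideanLin Eᵀ v)) := by
      rw [hMeq, sgs_mul_apply, sgs_mul_apply]
    have b1 : ‖Matrix.toEuclideanLin Eᵀ v‖ ≤ c₂ * ‖v‖ :=
      sgs_transpose_bound k E c₂ hc₂.le hEbd v
    have b2 : ‖Matrix.toEuclideanLin D⁻¹ (Matrix.toEuclideanLin Eᵀ v)‖
        ≤ c₁ * δt * (c₂ * ‖v‖) := by
      refine (hDinv _).trans ?_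
      exact mul_le_mul_of_nonneg_left b1 (by positivity)
    have b3 : ‖Matrix.toEuclideanLin M v‖ ≤ c₂ * (c₁ * δt * (c₂ * ‖v‖)) := by
      rw [happ]
      refine (hEbd _).trans ?_
      exact mul_le_mul_of_nonneg_left b2 hc₂.le
    have hvb : ‖v‖ ≤ c₃ * δt := hstep
    calc ‖Matrix.toEuclideanLin M v‖ ≤ c₂ * (c₁ * δt * (c₂ * ‖v‖)) := b3
      _ ≤ c₂ * (c₁ * δt * (c₂ * (c₃ * δt))) := by
          have := norm_nonneg v
          gcongr
      _ = c₁ * c₂ ^ 2 * c₃ * δt ^ 2 := by ring
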